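/- Fix an integer n ≥ 2 and let X_2, ..., X_n be independent random variables, where X_k is exponentially distributed with rate (k-1)/2, and let L_n := Σ_{k=2}^{n} X_k. Then for every positive integer j, E[L_n^j] = j! 2^j Σ_{k=1}^{n-1} ((-1)^{k+1}/k^j) C(n-1, k). -/

import Mathlib

open MeasureTheory ProbabilityTheory

section stmt10Aux
open Real Set
open scoped ENNReal NNReal

lemma expPDFReal_eq (r x : ℝ) :
    exponentialPDFReal r x = if 0 ≤ x then r * Real.exp (-(r * x)) else 0 := by
  unfold exponentialPDFReal gammaPDFReal
  simp [Real.Gamma_one, Real.rpow_one]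

lemma exp_aux_integrable {r : ℝ} (hr : 0 < r) (j : ℕ) :
    Integrable (fun x : ℝ => exponentialPDFReal r x * x ^ j) := by
  have h1 : IntegrableOn (fun x : ℝ => x ^ (j:ℝ) * Real.exp (-r * x ^ (1:ℝ))) (Ioi 0) :=
    integrableOn_rpow_mul_exp_neg_mul_rpow
      (lt_of_lt_of_le neg_one_lt_zero (Nat.cast_nonneg j)) one_pos hr
  have h2 : IntegrableOn (fun x : ℝ => r * Real.exp (-(r * x)) * x ^ j) (Ici 0) := by
    rw [integrableOn_Ici_iff_integrableOn_Ioi]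
    refine IntegrableOn.congr_fun (h1.const_mul r) (fun x hx => ?_) measurableSet_Ioi
    simp only [Real.rpow_natCast, Real.rpow_one, neg_mul]
    ring
  have : (fun x : ℝ => exponentialPDFReal r x * x ^ j)
      = Set.indicator (Ici 0) (fun x => r * Real.exp (-(r * x)) * x ^ j) := by
    funext x
    rw [expPDFReal_eq, Set.indicator_apply]
    by_cases h : 0 ≤ x <;> simp [h]
  rw [this, integrable_indicator_iff measurableSet_Ici]
  exact h2

lemma expMeasure_withDensity (r : ℝ) :
    expMeasure r = volume.withDensity
      (fun x => ((Real.toNNReal (exponentialPDFReal r x) : ℝ≥0) : ℝ≥0∞)) := rfl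

lemma exp_pow_integrable {r : ℝ} (hr : 0 < r) (j : ℕ) :
    Integrable (fun x : ℝ => x ^ j) (expMeasure r) := by
  rw [expMeasure_withDensity,
    integrable_withDensity_iff_integrable_smul ((measurable_exponentialPDFReal r).real_toNNReal)]
  refine (exp_aux_integrable hr j).congr (Filter.Eventually.of_forall fun x => ?_)
  dsimp only
  rw [NNReal.smul_def, Real.coe_toNNReal _ (exponentialPDFReal_nonneg hr x), smul_eq_mul]

lemma exp_pow_integral {r : ℝ} (hr : 0 < r) (j : ℕ) :
    ∫ x, x ^ j ∂(expMeasure r) = (j.factorial : ℝ) / r ^ j := by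
  rw [expMeasure_withDensity,
    integral_withDensity_eq_integral_smul ((measurable_exponentialPDFReal r).real_toNNReal)]
  have h0 : ∀ x : ℝ, (Real.toNNReal (exponentialPDFReal r x) : ℝ≥0) • (x ^ j)
      = Set.indicator (Ici 0) (fun x => r * Real.exp (-(r * x)) * x ^ j) x := by
    intro x
    rw [NNReal.smul_def, Real.coe_toNNReal _ (exponentialPDFReal_nonneg hr x),
      expPDFReal_eq, Set.indicator_apply]
    by_cases h : 0 ≤ x <;> simp [h]
  simp_rw [h0]
  rw [integral_indicator measurableSet_Ici, integral_Ici_eq_integral_Ioi]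
  have h1 : ∀ x : ℝ, r * Real.exp (-(r * x)) * x ^ j
      = r * (x ^ ((j + 1 : ℝ) - 1) * Real.exp (-(r * x))) := by
    intro x
    rw [add_sub_cancel_right, Real.rpow_natCast]
    ring
  simp_rw [h1]
  rw [MeasureTheory.integral_const_mul, integral_rpow_mul_exp_neg_mul_Ioi (by positivity) hr]
  rw [Real.Gamma_nat_eq_factorial,
    show ((j:ℝ)+1) = ((j+1 : ℕ):ℝ) by push_cast; ring, Real.rpow_natCast, div_pow, one_pow,
    pow_succ]
  field_simp

lemma alt_real (t : ℕ) (ht : t ≠ 0) :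
    ∑ i ∈ Finset.range (t+1), (-1:ℝ)^i * (t.choose i : ℝ) = 0 := by
  have h := Int.alternating_sum_range_choose_of_ne ht
  have h2 : ((∑ i ∈ Finset.range (t+1), (-1:ℤ)^i * (t.choose i : ℤ) : ℤ) : ℝ) = 0 := by
    rw [h]; simp
  push_cast at h2
  exact h2

lemma alt_sum_zero (t : ℕ) (ht : 1 ≤ t) :
    ∑ l ∈ Finset.Icc 1 (t+1), (-1:ℝ)^(l+1) * (l : ℝ) * ((t+1).choose l : ℝ) = 0 := by
  rw [← Finset.Ico_add_one_right_eq_Icc, Finset.sum_Ico_eq_sum_range]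
  have hrange : t + 1 + 1 - 1 = t + 1 := by omega
  rw [hrange]
  have key : ∀ i : ℕ, (-1:ℝ)^(1+i+1) * ((1+i : ℕ) : ℝ) * (((t+1).choose (1+i)) : ℝ)
      = ((t:ℝ)+1) * ((-1:ℝ)^i * (t.choose i : ℝ)) := by
    intro i
    have h := Nat.add_one_mul_choose_eq t i
    have h' : ((t:ℝ)+1) * (t.choose i : ℝ) = ((t+1).choose (i+1) : ℝ) * ((i:ℝ)+1) := by
      exact_mod_cast congrArg (fun z : ℕ => (z:ℝ)) h
    have hsgn : (-1:ℝ)^(1+i+1) = (-1:ℝ)^i := by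
      rw [show 1+i+1 = i+2 by ring, pow_add]; norm_num
    rw [hsgn, add_comm 1 i]
    push_cast
    rw [mul_assoc, mul_comm ((i:ℝ)+1), ← h']
    ring
  simp_rw [key]
  rw [← Finset.mul_sum, alt_real t (by omega), mul_zero]

lemma geom_div (y M : ℝ) (hy : y ≠ 0) (hM : M ≠ 0) (hyM : y ≠ M) (j : ℕ) (A B : ℝ)
    (hC : (M - y) * B = M * A) :
    A * (∑ k ∈ Finset.range (j+1), 1 / (y^k * M^(j-k))) = B / y^j - y * B / M^(j+1) := by
  have hne : 1/y - 1/M ≠ 0 := by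
    intro h
    apply hyM
    have h' : 1/y = 1/M := by linarith
    field_simp at h'
    exact h'.symm ▸ rfl
  have hsum : ∑ k ∈ Finset.range (j+1), 1/(y^k * M^(j-k))
      = ∑ i ∈ Finset.range (j+1), (1/y)^i * (1/M)^(j+1-1-i) := by
    refine Finset.sum_congr rfl fun k hk => ?_
    rw [show j+1-1 = j from rfl, div_pow, div_pow, one_pow, one_pow, one_div_mul_one_div]
  have hgeom := geom_sum₂_mul (1/y) (1/M) (j+1)
  rw [hsum]
  apply mul_right_cancel₀ hne
  rw [mul_assoc, hgeom]
  have hA : A = (M - y) * B / M := by rw [eq_div_iff hM]; linarith [hC]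
  rw [hA]
  field_simp
  have e1 : y * y⁻¹ = 1 := mul_inv_cancel₀ hy
  have e2 : y^j * y⁻¹^j = 1 := by rw [← mul_pow, e1, one_pow]
  have e3 : M * M⁻¹ = 1 := mul_inv_cancel₀ hM
  have e4 : M^j * M⁻¹^j = 1 := by rw [← mul_pow, e3, one_pow]
  linear_combination (B*M*M^j*(y^j*y⁻¹^j)) * e1 + (B*M*M^j) * e2 - (y*y^j*B*(M^j*M⁻¹^j)) * e3 - (y*y^j*B) * e4

lemma comb_step (t j : ℕ) (ht : 1 ≤ t) :
    (∑ k ∈ Finset.range (j+1),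
      (j.choose k : ℝ) * ((k.factorial : ℝ) * 2^k *
        ∑ l ∈ Finset.Icc 1 t, ((-1:ℝ)^(l+1) / (l:ℝ)^k) * (t.choose l : ℝ)) *
      (((j-k).factorial : ℝ) * 2^(j-k) / ((t:ℝ)+1)^(j-k)))
    = (j.factorial : ℝ) * 2^j *
        ∑ l ∈ Finset.Icc 1 (t+1), ((-1:ℝ)^(l+1) / (l:ℝ)^j) * ((t+1).choose l : ℝ) := by
  set M : ℝ := (t:ℝ)+1 with hMdef
  have hM0 : M ≠ 0 := by positivity
  have step1 : ∀ k ∈ Finset.range (j+1),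
      (j.choose k : ℝ) * ((k.factorial : ℝ) * 2^k *
        ∑ l ∈ Finset.Icc 1 t, ((-1:ℝ)^(l+1) / (l:ℝ)^k) * (t.choose l : ℝ)) *
      (((j-k).factorial : ℝ) * 2^(j-k) / M^(j-k))
      = ∑ l ∈ Finset.Icc 1 t, ((j.factorial : ℝ) * 2^j * (-1:ℝ)^(l+1)) *
          ((t.choose l : ℝ) * (1/((l:ℝ)^k * M^(j-k)))) := by
    intro k hk
    have hkj : k ≤ j := Finset.mem_range_succ_iff.mp hk
    simp only [Finset.mul_sum, Finset.sum_mul]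
    refine Finset.sum_congr rfl fun l hl => ?_
    have hl1 : 1 ≤ l := (Finset.mem_Icc.mp hl).1
    have hl0 : ((l:ℝ)) ≠ 0 := by
      have : (0:ℝ) < (l:ℝ) := by exact_mod_cast hl1
      linarith
    have hfac : (j.choose k : ℝ) * (k.factorial : ℝ) * ((j-k).factorial : ℝ)
        = (j.factorial : ℝ) := by
      exact_mod_cast congrArg (Nat.cast : ℕ → ℝ)
        (Nat.choose_mul_factorial_mul_factorial (Finset.mem_range_succ_iff.mp hk))
    have h2 : (2:ℝ)^k * 2^(j-k) = 2^j := by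
      rw [← pow_add]; congr 1; omega
    rw [← hfac, ← h2]
    field_simp
  rw [Finset.sum_congr rfl step1, Finset.sum_comm]
  have step2 : ∀ l ∈ Finset.Icc 1 t,
      (∑ k ∈ Finset.range (j+1), ((j.factorial : ℝ) * 2^j * (-1:ℝ)^(l+1)) *
        ((t.choose l : ℝ) * (1/((l:ℝ)^k * M^(j-k)))))
      = ((j.factorial : ℝ) * 2^j * (-1:ℝ)^(l+1)) *
          (((t+1).choose l : ℝ)/(l:ℝ)^j - (l:ℝ) * ((t+1).choose l : ℝ)/M^(j+1)) := by
    intro l hl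
    obtain ⟨hl1, hl2⟩ := Finset.mem_Icc.mp hl
    rw [← Finset.mul_sum, ← Finset.mul_sum]
    congr 1
    have hl0 : ((l:ℝ)) ≠ 0 := by
      have : (0:ℝ) < (l:ℝ) := by exact_mod_cast hl1
      linarith
    have hlM : ((l:ℝ)) ≠ M := by
      rw [hMdef]
      have : (l:ℝ) ≤ (t:ℝ) := by exact_mod_cast hl2
      linarith
    refine geom_div (l:ℝ) M hl0 hM0 hlM j _ _ ?_
    have h := Nat.choose_mul_succ_eq t l
    have h' : ((t.choose l : ℕ) : ℝ) * ((t:ℝ)+1)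
        = (((t+1).choose l : ℕ) : ℝ) * (((t:ℝ)+1) - (l:ℝ)) := by
      have hcast : (((t+1-l : ℕ)) : ℝ) = ((t:ℝ)+1) - (l:ℝ) := by
        rw [Nat.cast_sub (by omega : l ≤ t+1)]
        push_cast; ring
      rw [← hcast]
      exact_mod_cast h
    rw [hMdef]
    linarith [h']
  rw [Finset.sum_congr rfl step2]
  have hsum2 : ∑ l ∈ Finset.Icc 1 t, (-1:ℝ)^(l+1) * (l:ℝ) * ((t+1).choose l : ℝ)
      = -((-1:ℝ)^(t+1+1) * ((t+1 : ℕ):ℝ) * ((t+1).choose (t+1) : ℝ)) := by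
    have h0 := alt_sum_zero t ht
    rw [Finset.sum_Icc_succ_top (by omega : 1 ≤ t+1)] at h0
    linarith [h0]
  rw [Finset.sum_Icc_succ_top (by omega : 1 ≤ t+1)]
  simp only [Nat.choose_self, Nat.cast_one] at hsum2 ⊢
  have expand : ∑ l ∈ Finset.Icc 1 t, ((j.factorial : ℝ) * 2^j * (-1:ℝ)^(l+1)) *
      (((t+1).choose l : ℝ)/(l:ℝ)^j - (l:ℝ) * ((t+1).choose l : ℝ)/M^(j+1))
      = (∑ l ∈ Finset.Icc 1 t, ((j.factorial : ℝ) * 2^j) *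
          (((-1:ℝ)^(l+1) / (l:ℝ)^j) * ((t+1).choose l : ℝ)))
        - ((j.factorial : ℝ) * 2^j / M^(j+1)) *
          ∑ l ∈ Finset.Icc 1 t, (-1:ℝ)^(l+1) * (l:ℝ) * ((t+1).choose l : ℝ) := by
    rw [Finset.mul_sum, ← Finset.sum_sub_distrib]
    refine Finset.sum_congr rfl fun l hl => ?_
    field_simp
  rw [expand, hsum2]
  have hMc : ((t+1 : ℕ):ℝ) = M := by rw [hMdef]; push_cast; ring
  rw [hMc, ← Finset.mul_sum]
  have hMj : M^(j+1) = M^j * M := by ring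
  rw [hMj]
  field_simp
  ring

end stmt10Aux

/-- Fix `n ≥ 2` and let `X_2, …, X_n` be independent random variables, `X_k`
exponential with rate `(k-1)/2` (here `X i` for `i : Fin (n-1)` stands for
`X_{i+2}`), and let `L_n := Σ_{k=2}^n X_k`.  Then for every `j ≥ 1`,
`E[L_n^j] = j! 2^j Σ_{k=1}^{n-1} ((-1)^{k+1}/k^j) C(n-1, k)`. -/
theorem stmt_10 {Ω : Type*} [MeasureSpace Ω] [IsProbabilityMeasure (ℙ : Measure Ω)]
    (n : ℕ) (hn : 2 ≤ n)
    (X : Fin (n - 1) → Ω → ℝ) (hmeas : ∀ i, Measurable (X i))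
    (hind : iIndepFun X ℙ)
    (hdist : ∀ i : Fin (n - 1), Measure.map (X i) ℙ
      = expMeasure ((((i : ℕ) : ℝ) + 1) / 2)) :
    ∀ j : ℕ, 1 ≤ j →
      (∫ ω, (∑ i, X i ω) ^ j ∂ℙ)
        = (j.factorial : ℝ) * 2 ^ j *
            ∑ k ∈ Finset.Icc 1 (n - 1),
              ((-1 : ℝ) ^ (k + 1) / (k : ℝ) ^ j) * ((n - 1).choose k : ℝ) := by
  classical
  have hm1 : 1 ≤ n - 1 := by omega
  have hXint : ∀ (i : Fin (n-1)) (r : ℕ), Integrable (fun ω => X i ω ^ r) ℙ := by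
    intro i r
    have hr : 0 < (((i:ℕ):ℝ)+1)/2 := by positivity
    have h := exp_pow_integrable hr r
    rw [← hdist i] at h
    exact (integrable_map_measure (measurable_id.pow_const r).aestronglyMeasurable
      (hmeas i).aemeasurable).mp h
  have hXmom : ∀ (i : Fin (n-1)) (r : ℕ), ∫ ω, X i ω ^ r ∂ℙ
      = (r.factorial : ℝ) * 2^r / (((i:ℕ):ℝ)+1)^r := by
    intro i r
    have hr : 0 < (((i:ℕ):ℝ)+1)/2 := by positivity
    have h := exp_pow_integral hr r
    rw [← hdist i, integral_map (f := fun x : ℝ => x ^ r) (hmeas i).aemeasurable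
      (by fun_prop : Measurable fun x : ℝ => x ^ r).aestronglyMeasurable] at h
    rw [h, div_pow]
    have hc : (((i:ℕ):ℝ)+1) ≠ 0 := by positivity
    field_simp
  have key : ∀ t, 1 ≤ t → t ≤ n - 1 → ∀ j : ℕ,
      Integrable (fun ω => (∑ i ∈ Finset.filter (fun i : Fin (n-1) => (i:ℕ) < t)
          Finset.univ, X i ω) ^ j) ℙ ∧
      (∫ ω, (∑ i ∈ Finset.filter (fun i : Fin (n-1) => (i:ℕ) < t) Finset.univ, X i ω) ^ j ∂ℙ)
        = (j.factorial : ℝ) * 2^j *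
          ∑ k ∈ Finset.Icc 1 t, ((-1:ℝ)^(k+1) / (k:ℝ)^j) * (t.choose k : ℝ) := by
    intro t ht
    induction t, ht using Nat.le_induction with
    | base =>
      intro _ j
      have hi0 : (0:ℕ) < n - 1 := by omega
      have hfilter : Finset.filter (fun i : Fin (n-1) => (i:ℕ) < 1) Finset.univ
          = {(⟨0, hi0⟩ : Fin (n-1))} := by
        ext i
        simp [Fin.ext_iff, Nat.lt_one_iff]
      rw [hfilter]
      simp only [Finset.sum_singleton]
      refine ⟨hXint _ j, ?_⟩
      rw [hXmom]
      simp [Finset.Icc_self]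
    | succ t ht ih =>
      intro hle j
      have hlt : t < n - 1 := by omega
      have ihh := ih (by omega)
      have hfilter : Finset.filter (fun i : Fin (n-1) => (i:ℕ) < t+1) Finset.univ
          = insert (⟨t, hlt⟩ : Fin (n-1))
              (Finset.filter (fun i : Fin (n-1) => (i:ℕ) < t) Finset.univ) := by
        ext i
        simp only [Finset.mem_filter, Finset.mem_univ, true_and, Finset.mem_insert,
          Fin.ext_iff]
        omega
      have hnotmem : (⟨t, hlt⟩ : Fin (n-1)) ∉
          Finset.filter (fun i : Fin (n-1) => (i:ℕ) < t) Finset.univ := by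
        simp
      have hindep : IndepFun (fun ω => ∑ i ∈ Finset.filter (fun i : Fin (n-1) => (i:ℕ) < t)
          Finset.univ, X i ω) (X ⟨t, hlt⟩) ℙ := by
        have h := hind.indepFun_finsetSum_of_notMem hmeas hnotmem
        have he : (∑ i ∈ Finset.filter (fun i : Fin (n-1) => (i:ℕ) < t) Finset.univ, X i)
            = fun ω => ∑ i ∈ Finset.filter (fun i : Fin (n-1) => (i:ℕ) < t) Finset.univ,
                X i ω := by
          funext ω
          rw [Finset.sum_apply]
        rwa [he] at h
      have hpind : ∀ a b : ℕ, IndepFun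
          (fun ω => (∑ i ∈ Finset.filter (fun i : Fin (n-1) => (i:ℕ) < t) Finset.univ,
            X i ω) ^ a) (fun ω => X ⟨t, hlt⟩ ω ^ b) ℙ :=
        fun a b => hindep.comp (measurable_id.pow_const a) (measurable_id.pow_const b)
      have hprod_int : ∀ k, Integrable (fun ω =>
          (∑ i ∈ Finset.filter (fun i : Fin (n-1) => (i:ℕ) < t) Finset.univ, X i ω) ^ k
            * X ⟨t, hlt⟩ ω ^ (j-k)) ℙ := by
        intro k
        exact (hpind k (j-k)).integrable_mul ((ihh k).1) (hXint _ (j-k))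
      have hexpand : (fun ω => (∑ i ∈ Finset.filter (fun i : Fin (n-1) => (i:ℕ) < t+1)
            Finset.univ, X i ω) ^ j)
          = fun ω => ∑ k ∈ Finset.range (j+1),
              (∑ i ∈ Finset.filter (fun i : Fin (n-1) => (i:ℕ) < t) Finset.univ, X i ω) ^ k
                * X ⟨t, hlt⟩ ω ^ (j-k) * (j.choose k : ℝ) := by
        funext ω
        rw [hfilter, Finset.sum_insert hnotmem, add_comm, add_pow]
      constructor
      · rw [hexpand]
        exact integrable_finset_sum _ (fun k _ => (hprod_int k).mul_const _)
      · rw [hexpand, integral_finset_sum _ (fun k _ => (hprod_int k).mul_const _)]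
        have hterm : ∀ k ∈ Finset.range (j+1),
            (∫ ω, (∑ i ∈ Finset.filter (fun i : Fin (n-1) => (i:ℕ) < t) Finset.univ,
                X i ω) ^ k * X ⟨t, hlt⟩ ω ^ (j-k) * (j.choose k : ℝ) ∂ℙ)
            = (j.choose k : ℝ) * ((k.factorial : ℝ) * 2^k *
                ∑ l ∈ Finset.Icc 1 t, ((-1:ℝ)^(l+1) / (l:ℝ)^k) * (t.choose l : ℝ)) *
              (((j-k).factorial : ℝ) * 2^(j-k) / ((t:ℝ)+1)^(j-k)) := by
          intro k hk
          rw [integral_mul_const]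
          have hmul : (∫ ω, (∑ i ∈ Finset.filter (fun i : Fin (n-1) => (i:ℕ) < t)
                Finset.univ, X i ω) ^ k * X ⟨t, hlt⟩ ω ^ (j-k) ∂ℙ)
              = (∫ ω, (∑ i ∈ Finset.filter (fun i : Fin (n-1) => (i:ℕ) < t)
                  Finset.univ, X i ω) ^ k ∂ℙ) * ∫ ω, X ⟨t, hlt⟩ ω ^ (j-k) ∂ℙ :=
            (hpind k (j-k)).integral_fun_mul_eq_mul_integral ((ihh k).1).aestronglyMeasurable (hXint _ (j-k)).aestronglyMeasurable
          rw [hmul, (ihh k).2, hXmom]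
          ring
        rw [Finset.sum_congr rfl hterm, comb_step t j ht]
  intro j hj
  have huniv : Finset.filter (fun i : Fin (n-1) => (i:ℕ) < n-1) Finset.univ
      = Finset.univ := by
    ext i
    simp [i.isLt]
  have h := (key (n-1) hm1 le_rfl j).2
  rwa [huniv] at h
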